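/- For every real α > 2, every rate R > 0 and every distance D > 0, setting T = 2^R − 1, one has ∫_{ℝ²} (T D^α ‖x‖^{−α}) / (1 + T D^α ‖x‖^{−α}) dx = C · T^{2/α} · D², where C = (2π/α) · Γ(2/α) · Γ(1 − 2/α). (Here the integrand is interpreted as 1 at x = 0, a Lebesgue-null point.) -/

import Mathlib

open MeasureTheory

open Real Set in
private lemma beta_Ioo' (a : ℝ) (h0 : 0 < a) (h1 : a < 1) :
    ∫ x in Ioo (0:ℝ) 1, x ^ (a - 1) * (1 - x) ^ (-a) = Real.Gamma a * Real.Gamma (1 - a) := by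
  have h2 : (0:ℝ) < 1 - a := by linarith
  have keyC : (Complex.Gamma a) * Complex.Gamma ((1 - a : ℝ))
      = Complex.betaIntegral a ((1 - a : ℝ)) := by
    have := Complex.Gamma_mul_Gamma_eq_betaIntegral (s := (a:ℂ)) (t := ((1 - a : ℝ) : ℂ))
      (by simpa using h0) (by simpa using h2)
    rw [show ((a:ℂ) + ((1 - a : ℝ):ℂ)) = 1 by push_cast; ring, Complex.Gamma_one, one_mul] at this
    exact this
  have hbeta : Complex.betaIntegral a ((1 - a : ℝ)) =
      ((∫ x in (0:ℝ)..1, x ^ (a - 1) * (1 - x) ^ (-a) : ℝ) : ℂ) := by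
    rw [Complex.betaIntegral]
    rw [← intervalIntegral.integral_ofReal]
    refine intervalIntegral.integral_congr fun x hx => ?_
    rw [uIcc_of_le zero_le_one] at hx
    have hx0 : (0:ℝ) ≤ x := hx.1
    have hx1 : (0:ℝ) ≤ 1 - x := by linarith [hx.2]
    have e1 : ((x:ℂ)) ^ ((a:ℂ) - 1) = ((x ^ (a-1) : ℝ) : ℂ) := by
      rw [Complex.ofReal_cpow hx0]; push_cast; ring_nf
    have e2 : ((1:ℂ) - (x:ℂ)) ^ (((1 - a : ℝ):ℂ) - 1) = (((1-x) ^ (-a) : ℝ) : ℂ) := by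
      rw [show ((1:ℂ) - (x:ℂ)) = (((1 - x : ℝ)):ℂ) by push_cast; ring,
        Complex.ofReal_cpow hx1]
      push_cast; ring_nf
    rw [e1, e2]; push_cast; ring
  have creal : ((Real.Gamma a * Real.Gamma (1 - a) : ℝ) : ℂ)
      = ((∫ x in (0:ℝ)..1, x ^ (a - 1) * (1 - x) ^ (-a) : ℝ) : ℂ) := by
    rw [Complex.ofReal_mul, ← Complex.Gamma_ofReal, ← Complex.Gamma_ofReal, keyC, hbeta]
  have hreq : Real.Gamma a * Real.Gamma (1 - a)
      = ∫ x in (0:ℝ)..1, x ^ (a - 1) * (1 - x) ^ (-a) := Complex.ofReal_inj.mp creal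
  rw [hreq, intervalIntegral.integral_of_le zero_le_one, integral_Ioc_eq_integral_Ioo]

open Real Set in
private lemma beta_Ioi' (a : ℝ) (h0 : 0 < a) (h1 : a < 1) :
    ∫ t in Ioi (0:ℝ), t ^ (a - 1) / (1 + t) = Real.Gamma a * Real.Gamma (1 - a) := by
  have himg : (fun x : ℝ => x / (1 - x)) '' Ioo 0 1 = Ioi 0 := by
    ext y
    simp only [mem_image, mem_Ioi, mem_Ioo]
    constructor
    · rintro ⟨x, hx, rfl⟩
      exact div_pos hx.1 (by linarith [hx.2])
    · intro hy
      refine ⟨y / (1 + y), ⟨div_pos hy (by linarith), ?_⟩, ?_⟩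
      · rw [div_lt_one (by linarith)]; linarith
      · have h1y : (1:ℝ) + y ≠ 0 := by positivity
        field_simp
        ring
  have hderiv : ∀ x ∈ Ioo (0:ℝ) 1, HasDerivWithinAt (fun x : ℝ => x / (1 - x))
      (((1 - x) ^ 2)⁻¹) (Ioo 0 1) x := by
    intro x hx
    have hu : (0:ℝ) < 1 - x := by linarith [hx.2]
    have := (hasDerivAt_id x).div ((hasDerivAt_const x (1:ℝ)).sub (hasDerivAt_id x)) hu.ne'
    refine this.hasDerivWithinAt.congr_deriv ?_
    simp only [Pi.sub_apply, id]
    rw [inv_eq_one_div]; congr 1; ring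
  have hinj : InjOn (fun x : ℝ => x / (1 - x)) (Ioo 0 1) := by
    intro x hx y hy h
    have hxu : (0:ℝ) < 1 - x := by linarith [hx.2]
    have hyu : (0:ℝ) < 1 - y := by linarith [hy.2]
    simp only at h
    rw [div_eq_div_iff hxu.ne' hyu.ne'] at h
    nlinarith [h]
  have key := integral_image_eq_integral_abs_deriv_smul measurableSet_Ioo hderiv hinj
    (fun t => t ^ (a - 1) / (1 + t))
  rw [himg] at key
  rw [key, ← beta_Ioo' a h0 h1]
  refine setIntegral_congr_fun measurableSet_Ioo fun x hx => ?_
  have hx0 : (0:ℝ) < x := hx.1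
  have hu : (0:ℝ) < 1 - x := by linarith [hx.2]
  have e1 : (1:ℝ) + x / (1 - x) = (1 - x)⁻¹ := by field_simp; ring
  have e2 : (x / (1 - x)) ^ (a - 1) = x ^ (a - 1) / (1 - x) ^ (a - 1) :=
    Real.div_rpow hx0.le hu.le _
  have e3 : (1 - x:ℝ) ^ (-a) = ((1-x) ^ (a-1))⁻¹ * (1-x)⁻¹ := by
    rw [show (-a) = -(a-1) + (-1:ℝ) by ring, Real.rpow_add hu, Real.rpow_neg hu.le,
      Real.rpow_neg_one]
  simp only [smul_eq_mul, e1, e2]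
  rw [abs_of_nonneg (by positivity), e3]
  have hp : (0:ℝ) < (1-x) ^ (a-1) := Real.rpow_pos_of_pos hu _
  field_simp

open Real Set in
private lemma J_eval' (α : ℝ) (hα : 2 < α) :
    ∫ y in Ioi (0:ℝ), y / (1 + y ^ α)
      = α⁻¹ * (Real.Gamma (2/α) * Real.Gamma (1 - 2/α)) := by
  have hαpos : (0:ℝ) < α := by linarith
  have h0 : 0 < 2/α := by positivity
  have h1 : 2/α < 1 := by rw [div_lt_one hαpos]; linarith
  have key := integral_comp_rpow_Ioi_of_pos
    (g := fun t => α⁻¹ * (t ^ (2/α - 1) / (1 + t))) hαpos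
  have lhs_eq : ∫ x in Ioi (0:ℝ), (α * x ^ (α - 1)) •
      (α⁻¹ * ((x ^ α) ^ (2/α - 1) / (1 + x ^ α))) = ∫ y in Ioi (0:ℝ), y / (1 + y ^ α) := by
    refine setIntegral_congr_fun measurableSet_Ioi fun x hx => ?_
    have hx0 : (0:ℝ) < x := hx
    rw [smul_eq_mul, ← Real.rpow_mul hx0.le]
    rw [show α * (2/α - 1) = 2 - α by field_simp]
    rw [show (α * x ^ (α-1)) * (α⁻¹ * (x ^ (2-α) / (1 + x ^ α)))
        = (α * α⁻¹) * ((x ^ (α-1) * x ^ (2-α)) / (1 + x ^ α)) by ring]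
    rw [mul_inv_cancel₀ hαpos.ne', ← Real.rpow_add hx0, one_mul,
      show α - 1 + (2 - α) = (1:ℝ) by ring, Real.rpow_one]
  rw [← lhs_eq, key]
  rw [integral_const_mul, beta_Ioi' (2/α) h0 h1]

open Real Set in
private lemma K_scale' (α K : ℝ) (hα : 0 < α) (hK : 0 < K) :
    ∫ y in Ioi (0:ℝ), y * (K / (K + y ^ α))
      = K ^ (2/α) * ∫ y in Ioi (0:ℝ), y / (1 + y ^ α) := by
  set b := K ^ (1/α) with hb_def
  have hb : 0 < b := Real.rpow_pos_of_pos hK _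
  have hbα : b ^ α = K := by
    rw [hb_def, ← Real.rpow_mul hK.le, one_div_mul_cancel hα.ne', Real.rpow_one]
  have key := integral_comp_mul_left_Ioi (fun y => y * (K / (K + y ^ α))) 0 hb
  rw [mul_zero] at key
  have congr1 : ∫ x in Ioi (0:ℝ), (b * x) * (K / (K + (b * x) ^ α))
      = ∫ x in Ioi (0:ℝ), b * (x / (1 + x ^ α)) := by
    refine setIntegral_congr_fun measurableSet_Ioi fun x hx => ?_
    have hx0 : (0:ℝ) < x := hx
    have hxα : (0:ℝ) < x ^ α := Real.rpow_pos_of_pos hx0 _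
    rw [Real.mul_rpow hb.le hx0.le, hbα]
    have h1x : (0:ℝ) < 1 + x ^ α := by positivity
    rw [show K + K * x ^ α = K * (1 + x ^ α) by ring]
    field_simp
  rw [congr1, integral_const_mul] at key
  have step : (∫ y in Ioi (0:ℝ), y * (K / (K + y ^ α)))
      = b * (b * ∫ x in Ioi (0:ℝ), x / (1 + x ^ α)) := by
    have e : (∫ y in Ioi (0:ℝ), y * (K / (K + y ^ α)))
        = b * (b⁻¹ * ∫ y in Ioi (0:ℝ), y * (K / (K + y ^ α))) := by
      rw [← mul_assoc, mul_inv_cancel₀ hb.ne', one_mul]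
    rw [e]
    congr 1
    rw [show b⁻¹ * (∫ y in Ioi (0:ℝ), y * (K / (K + y ^ α)))
        = b⁻¹ • ∫ y in Ioi (0:ℝ), y * (K / (K + y ^ α)) from (smul_eq_mul ..).symm, ← key]
  rw [step, ← mul_assoc, hb_def, ← Real.rpow_add hK, show 1/α + 1/α = 2/α by ring]

open scoped Classical in
/-- For `α > 2`, rate `R > 0`, distance `D > 0` and `T = 2^R − 1`, the planar integral of
`(T D^α ‖x‖^{−α})/(1 + T D^α ‖x‖^{−α})` (reading the integrand as `1` at the null point
`x = 0`) equals `C T^{2/α} D²` with `C = (2π/α) Γ(2/α) Γ(1 − 2/α)`. -/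
theorem outage_exponent_integral (α R D : ℝ) (hα : 2 < α) (hR : 0 < R) (hD : 0 < D) :
    ∫ x : EuclideanSpace ℝ (Fin 2),
        (if x = 0 then (1 : ℝ)
         else ((2 ^ R - 1) * D ^ α * ‖x‖ ^ (-α)) / (1 + (2 ^ R - 1) * D ^ α * ‖x‖ ^ (-α)))
      = (2 * Real.pi / α) * Real.Gamma (2 / α) * Real.Gamma (1 - 2 / α)
          * (2 ^ R - 1) ^ (2 / α) * D ^ 2 := by
  classical
  have hαpos : (0:ℝ) < α := by linarith
  have hT : (0:ℝ) < 2 ^ R - 1 := by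
    have : (1:ℝ) < 2 ^ R := Real.one_lt_rpow_iff_of_pos (by norm_num) |>.mpr (Or.inl ⟨by norm_num, hR⟩)
    linarith
  set T : ℝ := 2 ^ R - 1 with hT_def
  set K : ℝ := T * D ^ α with hK_def
  have hDα : (0:ℝ) < D ^ α := Real.rpow_pos_of_pos hD _
  have hK : 0 < K := mul_pos hT hDα
  set f : ℝ → ℝ := fun y => if y = 0 then 1 else K * y ^ (-α) / (1 + K * y ^ (-α)) with hf_def
  have hfun : (fun x : EuclideanSpace ℝ (Fin 2) =>
      (if x = 0 then (1 : ℝ)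
       else (T * D ^ α * ‖x‖ ^ (-α)) / (1 + T * D ^ α * ‖x‖ ^ (-α))))
      = fun x => f ‖x‖ := by
    funext x
    by_cases hx : x = 0
    · simp [hx, hf_def]
    · have hnx : ‖x‖ ≠ 0 := norm_ne_zero_iff.mpr hx
      simp [hf_def, hx, hnx, hK_def]
  rw [show (∫ x : EuclideanSpace ℝ (Fin 2),
        (if x = 0 then (1 : ℝ)
         else ((2 ^ R - 1) * D ^ α * ‖x‖ ^ (-α)) / (1 + (2 ^ R - 1) * D ^ α * ‖x‖ ^ (-α))))
      = ∫ x : EuclideanSpace ℝ (Fin 2), f ‖x‖ by rw [← hfun]]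
  rw [MeasureTheory.integral_fun_norm_addHaar (volume : Measure (EuclideanSpace ℝ (Fin 2))) f]
  have hdim : Module.finrank ℝ (EuclideanSpace ℝ (Fin 2)) = 2 := finrank_euclideanSpace_fin
  rw [hdim]
  have hvol : ((volume : Measure (EuclideanSpace ℝ (Fin 2))) (Metric.ball 0 1)).toReal
      = Real.pi := by
    rw [EuclideanSpace.volume_ball]
    simp only [Fintype.card_fin]
    rw [show ((2:ℕ):ℝ)/2 + 1 = 2 by norm_num]
    rw [Real.Gamma_two]
    rw [show (Real.sqrt Real.pi) ^ 2 / 1 = Real.pi by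
      rw [Real.sq_sqrt Real.pi_nonneg]; ring]
    simp [ENNReal.toReal_ofReal Real.pi_nonneg]
  rw [measureReal_def, hvol]
  have hint : ∫ y in Set.Ioi (0:ℝ), y ^ (2 - 1) • f y
      = ∫ y in Set.Ioi (0:ℝ), y * (K / (K + y ^ α)) := by
    refine setIntegral_congr_fun measurableSet_Ioi fun y hy => ?_
    have hy0 : (0:ℝ) < y := hy
    have hyα : (0:ℝ) < y ^ α := Real.rpow_pos_of_pos hy0 _
    simp only [hf_def, smul_eq_mul, if_neg hy0.ne']
    rw [show y ^ (2 - 1) = y by norm_num, Real.rpow_neg hy0.le]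
    have h1 : (0:ℝ) < 1 + K * (y ^ α)⁻¹ := by positivity
    have h2 : (0:ℝ) < K + y ^ α := by positivity
    congr 1
    rw [div_eq_div_iff h1.ne' h2.ne']
    have hinv : (y ^ α)⁻¹ * y ^ α = 1 := inv_mul_cancel₀ hyα.ne'
    linear_combination K * hinv
  rw [hint, K_scale' α K hαpos hK, J_eval' α hα]
  have hK2 : K ^ (2/α) = T ^ (2/α) * D ^ 2 := by
    rw [hK_def, Real.mul_rpow hT.le hDα.le, ← Real.rpow_natCast D 2, ← Real.rpow_mul hD.le]
    rw [show α * (2/α) = ((2:ℕ):ℝ) by push_cast; field_simp]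
  rw [hK2]
  simp only [nsmul_eq_mul, smul_eq_mul, Nat.cast_ofNat]
  ring
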